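/- Let K be an algebraically closed field and let M̃ = {(0,β) : β ∈ K, β ≠ 0} ∪ {(α,0) : α ∈ K, α ≠ 0} ∪ {(α,β) ∈ K × K : αβ = −1}. Then M̃ is exactly one 𝒩-equivalence class: a point (α,β) ∈ K × K belongs to M̃ if and only if it is 𝒩-equivalent to the point (0,1). -/

import Mathlib

/-- The step relation generating the partial action of the group `𝒩` on `K × K`. -/
def Rstep {K : Type*} [Field K] (p q : K × K) : Prop :=
  (∃ s : K, s ≠ 0 ∧ q = (s ^ 2 * p.1, s⁻¹ ^ 2 * p.2)) ∨
  (p.2 ≠ 0 ∧ q = (p.2⁻¹ * (1 + p.1 * p.2), -p.2)) ∨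
  (p.1 ≠ 0 ∧ q = (-p.1⁻¹, p.1 * (1 + p.1 * p.2))) ∨
  (1 + p.1 * p.2 ≠ 0 ∧ q = (-p.2 * (1 + p.1 * p.2)⁻¹, -p.1 * (1 + p.1 * p.2)))

/-- The invariant: the product is `-1`, or the product is `0` and the point is not the origin. -/
def MInv {K : Type*} [Field K] (p : K × K) : Prop :=
  p.1 * p.2 = -1 ∨ (p.1 * p.2 = 0 ∧ p ≠ (0, 0))

lemma inv_of_rstep {K : Type*} [Field K] {p q : K × K} (h : Rstep p q) : MInv p ↔ MInv q := by
  obtain ⟨α, β⟩ := p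
  rcases h with ⟨s, hs, rfl⟩ | ⟨hb, rfl⟩ | ⟨ha, rfl⟩ | ⟨ht, rfl⟩
  · have hprod : (s ^ 2 * α) * (s⁻¹ ^ 2 * β) = α * β := by
      field_simp; try ring
    constructor <;> rintro (h | ⟨h1, h2⟩)
    · left; rw [hprod]; exact h
    · right
      refine ⟨by rw [hprod]; exact h1, ?_⟩
      simp only [Prod.mk.injEq, ne_eq, not_and] at h2 ⊢
      intro h3 h4
      exact h2 (by simpa [hs] using h3) (by simpa [hs] using h4)
    · left; rwa [hprod] at h
    · right
      refine ⟨by rwa [hprod] at h1, ?_⟩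
      intro h3
      rw [Prod.mk.injEq] at h3
      exact h2 (by simp [h3.1, h3.2])
  · have hprod : (β⁻¹ * (1 + α * β)) * (-β) = -(1 + α * β) := by
      field_simp; try ring
    constructor <;> rintro (h | ⟨h1, h2⟩)
    · right
      constructor
      · rw [hprod, h]; ring
      · simp [Prod.ext_iff, hb]
    · left; rw [hprod, h1]; ring
    · right
      constructor
      · rw [hprod] at h
        have : α * β = 0 := by linear_combination -h
        rw [this]
      · simp [Prod.ext_iff, hb]
    · left
      rw [hprod] at h1
      linear_combination -h1
  · have hprod : (-α⁻¹) * (α * (1 + α * β)) = -(1 + α * β) := by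
      field_simp; try ring
    constructor <;> rintro (h | ⟨h1, h2⟩)
    · right
      constructor
      · rw [hprod, h]; ring
      · simp [Prod.ext_iff, ha]
    · left; rw [hprod, h1]; ring
    · right
      constructor
      · rw [hprod] at h
        have : α * β = 0 := by linear_combination -h
        rw [this]
      · simp [Prod.ext_iff, ha]
    · left
      rw [hprod] at h1
      linear_combination -h1
  · have hprod : (-β * (1 + α * β)⁻¹) * (-α * (1 + α * β)) = α * β := by
      rw [show (-β * (1 + α * β)⁻¹) * (-α * (1 + α * β)) = α * β * ((1 + α * β)⁻¹ * (1 + α * β)) by ring, inv_mul_cancel₀ (show (1 + α * β) ≠ 0 from ht), mul_one]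
    constructor <;> rintro (h | ⟨h1, h2⟩)
    · left; rw [hprod]; exact h
    · right
      refine ⟨by rw [hprod]; exact h1, ?_⟩
      intro hq
      rw [Prod.mk.injEq] at hq
      have hβ : β = 0 := by
        rcases mul_eq_zero.mp hq.1 with h | h
        · exact neg_eq_zero.mp h
        · exact absurd h (inv_ne_zero ht)
      have hα : α = 0 := by
        rcases mul_eq_zero.mp hq.2 with h | h
        · exact neg_eq_zero.mp h
        · exact absurd h ht
      exact h2 (by simp [Prod.ext_iff, hα, hβ])
    · left; rwa [hprod] at h
    · right
      refine ⟨by rwa [hprod] at h1, ?_⟩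
      intro h3
      rw [Prod.mk.injEq] at h3
      exact h2 (by simp [h3.1, h3.2])

lemma inv_of_eqvgen {K : Type*} [Field K] {p q : K × K}
    (h : Relation.EqvGen Rstep p q) : MInv p ↔ MInv q := by
  induction h with
  | rel _ _ h => exact inv_of_rstep h
  | refl => rfl
  | symm _ _ _ ih => exact ih.symm
  | trans _ _ _ _ _ ih1 ih2 => exact ih1.trans ih2

/-- For nonzero `β`, `(0, β)` is equivalent to `(0, 1)`. -/
lemma eqv_zero_beta {K : Type*} [Field K] [IsAlgClosed K] {β : K} (hb : β ≠ 0) :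
    Relation.EqvGen (Rstep (K := K)) (0, β) (0, 1) := by
  obtain ⟨s, hs⟩ := IsAlgClosed.exists_pow_nat_eq β (n := 2) (by norm_num)
  have hs0 : s ≠ 0 := by rintro rfl; simp at hs; exact hb hs.symm
  apply Relation.EqvGen.rel
  left
  exact ⟨s, hs0, by rw [Prod.ext_iff]; constructor <;> field_simp <;> simp [hs]⟩

theorem tildeM_is_one_orbit {K : Type*} [Field K] [IsAlgClosed K] (p : K × K) :
    p ∈ ({q : K × K | q.1 = 0 ∧ q.2 ≠ 0} ∪ {q : K × K | q.2 = 0 ∧ q.1 ≠ 0} ∪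
        {q : K × K | q.1 * q.2 = -1}) ↔
      Relation.EqvGen Rstep p ((0 : K), (1 : K)) := by
  obtain ⟨α, β⟩ := p
  constructor
  · rintro ((⟨h1, h2⟩ | ⟨h1, h2⟩) | h)
    · simp only at h1 h2
      subst h1
      exact eqv_zero_beta h2
    · -- (α, 0) with α ≠ 0 : step rule 4 sends it to (0, -α)
      simp only at h1 h2
      subst h1
      refine Relation.EqvGen.trans _ ((0 : K), -α) _ ?_ (eqv_zero_beta (by simpa using h2))
      apply Relation.EqvGen.rel
      right; right; right
      simp
    · -- α β = -1 : rule 2 sends it to (0, -β)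
      simp only [Set.mem_setOf_eq] at h
      have hb : β ≠ 0 := by rintro rfl; simp at h
      refine Relation.EqvGen.trans _ ((0 : K), -β) _ ?_ (eqv_zero_beta (by simpa using hb))
      apply Relation.EqvGen.rel
      right; left
      refine ⟨hb, ?_⟩
      simp only [Prod.mk.injEq]
      constructor
      · rw [show (1 : K) + α * β = 0 by rw [h]; ring]; ring
      · trivial
  · intro h
    have hInv : MInv ((α, β) : K × K) := by
      rw [inv_of_eqvgen h]
      right
      simp [MInv, Prod.ext_iff]
    rcases hInv with h | ⟨h1, h2⟩
    · right; exact h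
    · rcases mul_eq_zero.mp h1 with h | h
      · left; left
        refine ⟨h, fun hb => h2 ?_⟩
        exact Prod.ext h hb
      · left; right
        refine ⟨h, fun ha => h2 ?_⟩
        exact Prod.ext ha h
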